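/- Let σ be a permutation of {1,…,d} and let K̃(σ) := {x ∈ ℤ_{≥0}^d : x_{σ(1)} ≥ x_{σ(2)} ≥ ⋯ ≥ x_{σ(d)}, with x_{σ(j)} > x_{σ(j+1)} whenever j ∈ Des σ}. Then, as an identity of formal power series in z, (Σ_{t≥0} #{x ∈ K̃(σ) : x_1 + ⋯ + x_d = t} z^t) · Π_{j=1}^d (1 − z^j) = z^{maj σ}. -/

import Mathlib

open scoped Classical

/-- The major index of a permutation `σ` of `{0,…,d-1}` (written `{1,…,d}` in 1-based
notation): the sum of the (1-based) positions `j` with `σ(j) > σ(j+1)`. In 0-based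
notation, the pair of positions `(i, i+1)` contributes `i+1` when `σ(i) > σ(i+1)`. -/
def majIdx {d : ℕ} (σ : Equiv.Perm (Fin d)) : ℕ :=
  ∑ i : Fin d, if h : (i : ℕ) + 1 < d then
    (if σ ⟨(i : ℕ) + 1, h⟩ < σ i then (i : ℕ) + 1 else 0) else 0

/-- Membership in `K̃(σ)`: `x ∈ ℤ_{≥0}^d` satisfies `x_{σ(1)} ≥ x_{σ(2)} ≥ ⋯ ≥ x_{σ(d)}`,
with strict inequality `x_{σ(j)} > x_{σ(j+1)}` exactly at descent positions `j ∈ Des σ`. -/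
def MemKtilde {d : ℕ} (σ : Equiv.Perm (Fin d)) (x : Fin d → ℕ) : Prop :=
  ∀ i : Fin d, ∀ h : (i : ℕ) + 1 < d,
    x (σ ⟨(i : ℕ) + 1, h⟩) ≤ x (σ i) ∧
    (σ ⟨(i : ℕ) + 1, h⟩ < σ i → x (σ ⟨(i : ℕ) + 1, h⟩) < x (σ i))

/-! ### Auxiliary definitions -/

/-- A weakly decreasing sequence. -/
def DecSeq {d : ℕ} (y : Fin d → ℕ) : Prop :=
  ∀ i : Fin d, ∀ h : (i : ℕ) + 1 < d, y ⟨(i : ℕ) + 1, h⟩ ≤ y i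

/-- The number of weakly decreasing sequences of length `d` with sum `t`. -/
noncomputable def decCount (d t : ℕ) : ℕ :=
  Nat.card {y : Fin d → ℕ // DecSeq y ∧ ∑ i, y i = t}

theorem finite_of_sum_le {d t : ℕ} (P : (Fin d → ℕ) → Prop)
    (hP : ∀ y, P y → ∑ i, y i ≤ t) : Finite {y : Fin d → ℕ // P y} := by
  have hb : ∀ (y : {y : Fin d → ℕ // P y}) (i : Fin d), y.1 i < t + 1 := by
    intro y i
    have h1 : y.1 i ≤ ∑ j, y.1 j :=
      Finset.single_le_sum (fun j _ => Nat.zero_le _) (Finset.mem_univ i)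
    have h2 := hP y.1 y.2
    omega
  exact Finite.of_injective (fun y => fun i => (⟨y.1 i, hb y i⟩ : Fin (t + 1)))
    (by
      intro a b h
      apply Subtype.ext
      funext i
      exact congrArg Fin.val (congrFun h i))

instance instFiniteSumEq (d t : ℕ) (P : (Fin d → ℕ) → Prop) :
    Finite {y : Fin d → ℕ // P y ∧ ∑ i, y i = t} :=
  finite_of_sum_le _ (fun y hy => le_of_eq hy.2)

instance instFiniteSumAddEq (d t c : ℕ) (P : (Fin d → ℕ) → Prop) :
    Finite {y : Fin d → ℕ // P y ∧ (∑ i, y i) + c = t} :=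
  finite_of_sum_le (t := t) _ (fun y hy => by have := hy.2; omega)

theorem decCount_zero (t : ℕ) : decCount 0 t = if t = 0 then 1 else 0 := by
  unfold decCount
  split_ifs with h
  · subst h
    have : Nonempty {y : Fin 0 → ℕ // DecSeq y ∧ ∑ i, y i = 0} :=
      ⟨⟨fun i => i.elim0, fun i => i.elim0, by simp⟩⟩
    have hs : Subsingleton {y : Fin 0 → ℕ // DecSeq y ∧ ∑ i, y i = 0} := by
      constructor
      rintro ⟨y, hy⟩ ⟨z, hz⟩
      apply Subtype.ext
      funext i
      exact i.elim0
    exact Nat.card_unique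
  · have : IsEmpty {y : Fin 0 → ℕ // DecSeq y ∧ ∑ i, y i = t} := by
      constructor
      rintro ⟨y, hy, hs⟩
      simp at hs
      exact h hs.symm
    exact Nat.card_of_isEmpty

/-- Extend a sequence of length `d` by a final `0`. -/
def ext0 {d : ℕ} (y : Fin d → ℕ) : Fin (d + 1) → ℕ :=
  fun j => if h : (j : ℕ) < d then y ⟨j, h⟩ else 0

theorem ext0_sum {d : ℕ} (y : Fin d → ℕ) : ∑ i, ext0 y i = ∑ i, y i := by
  rw [Fin.sum_univ_castSucc]
  have h1 : ext0 y (Fin.last d) = 0 := by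
    simp [ext0]
  have h2 : ∀ i : Fin d, ext0 y (Fin.castSucc i) = y i := by
    intro i
    simp only [ext0, Fin.coe_castSucc]
    rw [dif_pos i.isLt]
  rw [h1]
  simp only [h2, add_zero]

theorem ext0_dec {d : ℕ} {y : Fin d → ℕ} (hy : DecSeq y) : DecSeq (ext0 y) := by
  intro i h
  simp only [ext0]
  split_ifs with h1 h2 h2
  · -- i+1 < d
    have h3 : (i : ℕ) < d := by omega
    have := hy ⟨(i : ℕ), h3⟩ (by simpa using h1)
    simpa using this
  · omega
  · exact Nat.zero_le _
  · exact Nat.zero_le _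

theorem decSeq_le {d : ℕ} {y : Fin d → ℕ} (hy : DecSeq y) :
    ∀ (k : ℕ) (i : Fin d) (h : (i : ℕ) + k < d), y ⟨(i : ℕ) + k, h⟩ ≤ y i := by
  intro k
  induction k with
  | zero => intro i h; simp
  | succ k ih =>
    intro i h
    have hk : (i : ℕ) + k < d := by omega
    calc y ⟨(i : ℕ) + (k + 1), h⟩ = y ⟨((⟨(i : ℕ) + k, hk⟩ : Fin d) : ℕ) + 1, by simp; omega⟩ :=
          rfl
      _ ≤ y ⟨(i : ℕ) + k, hk⟩ := hy ⟨(i : ℕ) + k, hk⟩ (by simp; omega)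
      _ ≤ y i := ih i hk

theorem decSeq_le' {d : ℕ} {y : Fin d → ℕ} (hy : DecSeq y) (i j : Fin d) (hij : i ≤ j) :
    y j ≤ y i := by
  have h : (i : ℕ) + ((j : ℕ) - (i : ℕ)) < d := by
    have := j.isLt
    have : (i : ℕ) ≤ (j : ℕ) := hij
    omega
  have := decSeq_le hy ((j : ℕ) - (i : ℕ)) i h
  have hj : (⟨(i : ℕ) + ((j : ℕ) - (i : ℕ)), h⟩ : Fin d) = j := by
    apply Fin.ext
    have : (i : ℕ) ≤ (j : ℕ) := hij
    simp
    omega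
  rwa [hj] at this

def add1 {d : ℕ} (y : Fin d → ℕ) : Fin d → ℕ := fun i => y i + 1

theorem add1_sum {d : ℕ} (y : Fin d → ℕ) : ∑ i, add1 y i = (∑ i, y i) + d := by
  unfold add1
  rw [Finset.sum_add_distrib]
  simp

theorem add1_dec {d : ℕ} {y : Fin d → ℕ} (hy : DecSeq y) : DecSeq (add1 y) := by
  intro i h
  have := hy i h
  simp only [add1]
  omega

def sub1 {d : ℕ} (y : Fin d → ℕ) : Fin d → ℕ := fun i => y i - 1

/-- The splitting bijection for the recurrence on `decCount`. -/
noncomputable def decSplit (d t : ℕ) :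
    ({y : Fin d → ℕ // DecSeq y ∧ ∑ i, y i = t} ⊕
      {y : Fin (d + 1) → ℕ // DecSeq y ∧ (∑ i, y i) + (d + 1) = t}) ≃
      {y : Fin (d + 1) → ℕ // DecSeq y ∧ ∑ i, y i = t} := by
  apply Equiv.ofBijective (Sum.elim
    (fun y => (⟨ext0 y.1, ext0_dec y.2.1, by rw [ext0_sum]; exact y.2.2⟩ :
      {y : Fin (d + 1) → ℕ // DecSeq y ∧ ∑ i, y i = t}))
    (fun y => ⟨add1 y.1, add1_dec y.2.1, by rw [add1_sum]; exact y.2.2⟩))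
  constructor
  · rintro (y | y) (z | z) h <;>
      simp only [Sum.elim_inl, Sum.elim_inr, Subtype.mk.injEq] at h
    · congr 1
      apply Subtype.ext
      funext i
      have := congrFun h (Fin.castSucc i)
      simpa [ext0, i.isLt] using this
    · exfalso
      have := congrFun h (Fin.last d)
      simp [ext0, add1] at this
    · exfalso
      have := congrFun h (Fin.last d)
      simp [ext0, add1] at this
    · congr 1
      apply Subtype.ext
      funext i
      have := congrFun h i
      simp only [add1] at this
      omega
  · rintro ⟨y, hy, hs⟩
    by_cases h0 : y (Fin.last d) = 0
    · refine ⟨Sum.inl ⟨fun i => y ⟨(i : ℕ), by omega⟩, ?_, ?_⟩, ?_⟩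
      · intro i h
        have h' : (i : ℕ) + 1 < d + 1 := by omega
        have := hy ⟨(i : ℕ), by omega⟩ h'
        simpa using this
      · rw [← hs, Fin.sum_univ_castSucc, h0, add_zero]
        apply Finset.sum_congr rfl
        intro i _
        congr 1
      · simp only [Sum.elim_inl]
        apply Subtype.ext
        funext j
        simp only [ext0]
        split_ifs with h
        · congr 1
        · have : j = Fin.last d := by
            apply Fin.ext
            have := j.isLt
            simp
            omega
          rw [this, h0]
    · have h1 : ∀ i : Fin (d + 1), 1 ≤ y i := by
        intro i
        have := decSeq_le' hy i (Fin.last d) (by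
          apply Fin.le_def.mpr
          have := i.isLt
          simp
          omega)
        omega
      have he : add1 (sub1 y) = y := by
        funext i
        have := h1 i
        simp only [add1, sub1]
        omega
      have hd : DecSeq (sub1 y) := by
        intro i h
        have := hy i h
        simp only [sub1]
        omega
      have hsum : (∑ i, sub1 y i) + (d + 1) = t := by
        have h2 := add1_sum (sub1 y)
        rw [he] at h2
        omega
      refine ⟨Sum.inr ⟨sub1 y, hd, hsum⟩, ?_⟩
      simp only [Sum.elim_inr]
      exact Subtype.ext he

theorem card_shift (d t c : ℕ) :
    Nat.card {y : Fin d → ℕ // DecSeq y ∧ (∑ i, y i) + c = t}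
      = if c ≤ t then decCount d (t - c) else 0 := by
  split_ifs with h
  · unfold decCount
    apply Nat.card_congr
    apply Equiv.subtypeEquivRight
    intro y
    constructor
    · rintro ⟨h1, h2⟩; exact ⟨h1, by omega⟩
    · rintro ⟨h1, h2⟩; exact ⟨h1, by omega⟩
  · have : IsEmpty {y : Fin d → ℕ // DecSeq y ∧ (∑ i, y i) + c = t} := by
      constructor
      rintro ⟨y, hy, hs⟩
      omega
    exact Nat.card_of_isEmpty

theorem decCount_succ (d t : ℕ) :
    decCount (d + 1) t
      = decCount d t + if d + 1 ≤ t then decCount (d + 1) (t - (d + 1)) else 0 := by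
  have h := Nat.card_congr (decSplit d t)
  rw [Nat.card_sum] at h
  calc decCount (d + 1) t
      = Nat.card {y : Fin d → ℕ // DecSeq y ∧ ∑ i, y i = t}
        + Nat.card {y : Fin (d + 1) → ℕ // DecSeq y ∧ (∑ i, y i) + (d + 1) = t} := h.symm
    _ = decCount d t + if d + 1 ≤ t then decCount (d + 1) (t - (d + 1)) else 0 := by
        rw [card_shift]
        rfl

open PowerSeries in
theorem decGF (d : ℕ) :
    (PowerSeries.mk fun t => (decCount d t : ℤ))
      * ∏ j ∈ Finset.range d, (1 - (PowerSeries.X : PowerSeries ℤ) ^ (j + 1)) = 1 := by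
  induction d with
  | zero =>
    rw [Finset.range_zero, Finset.prod_empty, mul_one]
    ext t
    rw [PowerSeries.coeff_mk, PowerSeries.coeff_one, decCount_zero]
    split_ifs <;> simp
  | succ d ih =>
    have step : (PowerSeries.mk fun t => (decCount (d + 1) t : ℤ))
        * (1 - (PowerSeries.X : PowerSeries ℤ) ^ (d + 1))
        = PowerSeries.mk fun t => (decCount d t : ℤ) := by
      ext t
      rw [mul_sub, mul_one, map_sub, PowerSeries.coeff_mul_X_pow']
      simp only [PowerSeries.coeff_mk]
      have := decCount_succ d t
      split_ifs with h
      · rw [if_pos h] at this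
        omega
      · rw [if_neg h] at this
        omega
    calc (PowerSeries.mk fun t => (decCount (d + 1) t : ℤ))
          * ∏ j ∈ Finset.range (d + 1), (1 - (PowerSeries.X : PowerSeries ℤ) ^ (j + 1))
        = ((PowerSeries.mk fun t => (decCount (d + 1) t : ℤ))
            * (1 - (PowerSeries.X : PowerSeries ℤ) ^ (d + 1)))
          * ∏ j ∈ Finset.range d, (1 - (PowerSeries.X : PowerSeries ℤ) ^ (j + 1)) := by
          rw [Finset.prod_range_succ]; ring
      _ = (PowerSeries.mk fun t => (decCount d t : ℤ))
          * ∏ j ∈ Finset.range d, (1 - (PowerSeries.X : PowerSeries ℤ) ^ (j + 1)) := by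
          rw [step]
      _ = 1 := ih

/-! ### The bijection with `K̃(σ)` -/

def desStep {d : ℕ} (σ : Equiv.Perm (Fin d)) (i : Fin d) : ℕ :=
  if h : (i : ℕ) + 1 < d then (if σ ⟨(i : ℕ) + 1, h⟩ < σ i then 1 else 0) else 0

def cfun {d : ℕ} (σ : Equiv.Perm (Fin d)) (j : Fin d) : ℕ :=
  ∑ i : Fin d, if j ≤ i then desStep σ i else 0

theorem cfun_succ {d : ℕ} (σ : Equiv.Perm (Fin d)) (j : Fin d) (h : (j : ℕ) + 1 < d) :
    cfun σ j = desStep σ j + cfun σ ⟨(j : ℕ) + 1, h⟩ := by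
  unfold cfun
  have key : ∀ i : Fin d, (if j ≤ i then desStep σ i else 0)
      = (if i = j then desStep σ i else 0)
        + (if (⟨(j : ℕ) + 1, h⟩ : Fin d) ≤ i then desStep σ i else 0) := by
    intro i
    by_cases h1 : (j : ℕ) ≤ (i : ℕ)
    · rw [if_pos (Fin.le_def.mpr h1)]
      by_cases h2 : (i : ℕ) = (j : ℕ)
      · have he : i = j := Fin.ext h2
        have hn : ¬ ((⟨(j : ℕ) + 1, h⟩ : Fin d) ≤ i) := by
          intro hle
          have : (j : ℕ) + 1 ≤ (i : ℕ) := Fin.le_def.mp hle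
          omega
        rw [if_pos he, if_neg hn, add_zero, he]
      · have hn : ¬ (i = j) := fun he => h2 (congrArg Fin.val he)
        have hp : (⟨(j : ℕ) + 1, h⟩ : Fin d) ≤ i := Fin.le_def.mpr (show (j : ℕ) + 1 ≤ (i : ℕ) by omega)
        rw [if_neg hn, if_pos hp, zero_add]
    · have hn1 : ¬ (j ≤ i) := fun hle => h1 (Fin.le_def.mp hle)
      have hn2 : ¬ (i = j) := fun he => h1 (le_of_eq (congrArg Fin.val he).symm)
      have hn3 : ¬ ((⟨(j : ℕ) + 1, h⟩ : Fin d) ≤ i) := by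
        intro hle
        have : (j : ℕ) + 1 ≤ (i : ℕ) := Fin.le_def.mp hle
        omega
      rw [if_neg hn1, if_neg hn2, if_neg hn3, add_zero]
  rw [Finset.sum_congr rfl (fun i _ => key i), Finset.sum_add_distrib,
    Finset.sum_ite_eq' Finset.univ j (desStep σ)]
  simp

theorem cfun_last {d : ℕ} (σ : Equiv.Perm (Fin d)) (j : Fin d) (h : ¬ ((j : ℕ) + 1 < d)) :
    cfun σ j = 0 := by
  unfold cfun
  apply Finset.sum_eq_zero
  intro i _
  split_ifs with hij
  · have hij' : (j : ℕ) ≤ (i : ℕ) := hij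
    have : (i : ℕ) + 1 < d → False := by
      have := i.isLt
      omega
    simp [desStep]
    intro hh
    exact absurd hh this
  · rfl

theorem sum_cfun {d : ℕ} (σ : Equiv.Perm (Fin d)) : ∑ j, cfun σ j = majIdx σ := by
  unfold cfun majIdx
  rw [Finset.sum_comm]
  apply Finset.sum_congr rfl
  intro i _
  have h1 : ∀ j : Fin d, (if j ≤ i then desStep σ i else 0)
      = (if j ∈ Finset.Iic i then desStep σ i else 0) := by
    intro j; simp [Finset.mem_Iic]
  rw [Finset.sum_congr rfl (fun j _ => h1 j), Finset.sum_ite_mem, Finset.univ_inter,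
    Finset.sum_const, Fin.card_Iic, smul_eq_mul]
  unfold desStep
  split_ifs <;> simp

theorem memK_step {d : ℕ} {σ : Equiv.Perm (Fin d)} {x : Fin d → ℕ} (hx : MemKtilde σ x)
    (j : Fin d) (h : (j : ℕ) + 1 < d) :
    x (σ ⟨(j : ℕ) + 1, h⟩) + desStep σ j ≤ x (σ j) := by
  obtain ⟨h1, h2⟩ := hx j h
  unfold desStep
  rw [dif_pos h]
  split_ifs with hlt
  · exact h2 hlt
  · simpa using h1

theorem memK_of_step {d : ℕ} {σ : Equiv.Perm (Fin d)} {x : Fin d → ℕ}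
    (hx : ∀ (j : Fin d) (h : (j : ℕ) + 1 < d), x (σ ⟨(j : ℕ) + 1, h⟩) + desStep σ j ≤ x (σ j)) :
    MemKtilde σ x := by
  intro j h
  have := hx j h
  unfold desStep at this
  rw [dif_pos h] at this
  split_ifs at this with hlt
  · exact ⟨by omega, fun _ => by omega⟩
  · exact ⟨by omega, fun hc => absurd hc hlt⟩

theorem cfun_le {d : ℕ} {σ : Equiv.Perm (Fin d)} {x : Fin d → ℕ} (hx : MemKtilde σ x) :
    ∀ j : Fin d, cfun σ j ≤ x (σ j) := by
  have key : ∀ n : ℕ, ∀ j : Fin d, d - (j : ℕ) ≤ n → cfun σ j ≤ x (σ j) := by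
    intro n
    induction n with
    | zero => intro j hj; have := j.isLt; omega
    | succ n ih =>
      intro j hj
      by_cases h : (j : ℕ) + 1 < d
      · rw [cfun_succ σ j h]
        have h1 := ih ⟨(j : ℕ) + 1, h⟩ (by simp; omega)
        have h2 := memK_step hx j h
        omega
      · rw [cfun_last σ j h]
        exact Nat.zero_le _
  intro j
  exact key d j (by omega)

noncomputable def ktEquiv {d : ℕ} (σ : Equiv.Perm (Fin d)) (t : ℕ) :
    {x : Fin d → ℕ // MemKtilde σ x ∧ ∑ i, x i = t} ≃
      {y : Fin d → ℕ // DecSeq y ∧ (∑ i, y i) + majIdx σ = t} where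
  toFun := fun p =>
    ⟨fun j => p.1 (σ j) - cfun σ j, by
      intro j h
      show p.1 (σ ⟨(j : ℕ) + 1, h⟩) - cfun σ ⟨(j : ℕ) + 1, h⟩ ≤ p.1 (σ j) - cfun σ j
      have h1 := cfun_le p.2.1 ⟨(j : ℕ) + 1, h⟩
      have h2 := cfun_le p.2.1 j
      have h3 := memK_step p.2.1 j h
      have h4 := cfun_succ σ j h
      omega, by
      show (∑ j, (p.1 (σ j) - cfun σ j)) + majIdx σ = t
      have hs : ∑ j, p.1 (σ j) = t := by
        rw [Equiv.sum_comp σ p.1]; exact p.2.2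
      have key : (∑ j, (p.1 (σ j) - cfun σ j)) + majIdx σ = ∑ j, p.1 (σ j) := by
        rw [← sum_cfun σ, ← Finset.sum_add_distrib]
        exact Finset.sum_congr rfl (fun j _ => Nat.sub_add_cancel (cfun_le p.2.1 j))
      omega⟩
  invFun := fun p =>
    ⟨fun i => p.1 (σ⁻¹ i) + cfun σ (σ⁻¹ i), by
      apply memK_of_step
      intro j h
      show p.1 (σ⁻¹ (σ ⟨(j : ℕ) + 1, h⟩)) + cfun σ (σ⁻¹ (σ ⟨(j : ℕ) + 1, h⟩)) + desStep σ j
          ≤ p.1 (σ⁻¹ (σ j)) + cfun σ (σ⁻¹ (σ j))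
      rw [(show ∀ a, σ⁻¹ (σ a) = a from σ.symm_apply_apply), (show ∀ a, σ⁻¹ (σ a) = a from σ.symm_apply_apply)]
      have h1 := p.2.1 j h
      have h2 := cfun_succ σ j h
      omega, by
      show ∑ i, (p.1 (σ⁻¹ i) + cfun σ (σ⁻¹ i)) = t
      have hs : ∑ i, (p.1 (σ⁻¹ i) + cfun σ (σ⁻¹ i)) = ∑ j, (p.1 j + cfun σ j) :=
        Equiv.sum_comp σ⁻¹ (fun j => p.1 j + cfun σ j)
      rw [hs, Finset.sum_add_distrib, sum_cfun σ]
      exact p.2.2⟩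
  left_inv := by
    rintro ⟨x, hx, hs⟩
    apply Subtype.ext
    funext i
    show x (σ (σ⁻¹ i)) - cfun σ (σ⁻¹ i) + cfun σ (σ⁻¹ i) = x i
    rw [(show ∀ a, σ (σ⁻¹ a) = a from σ.apply_symm_apply)]
    have := cfun_le hx (σ⁻¹ i)
    rw [(show ∀ a, σ (σ⁻¹ a) = a from σ.apply_symm_apply)] at this
    omega
  right_inv := by
    rintro ⟨y, hy, hs⟩
    apply Subtype.ext
    funext j
    show y (σ⁻¹ (σ j)) + cfun σ (σ⁻¹ (σ j)) - cfun σ j = y j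
    rw [(show ∀ a, σ⁻¹ (σ a) = a from σ.symm_apply_apply)]
    omega

theorem ktCard {d : ℕ} (σ : Equiv.Perm (Fin d)) (t : ℕ) :
    Nat.card {x : Fin d → ℕ // MemKtilde σ x ∧ ∑ i, x i = t}
      = if majIdx σ ≤ t then decCount d (t - majIdx σ) else 0 := by
  rw [Nat.card_congr (ktEquiv σ t)]
  exact card_shift d t (majIdx σ)

/-- The generating function of `K̃(σ)` by entry sum: multiplied by `∏_{j=1}^d (1-z^j)` it
equals `z^{maj σ}`. -/
theorem ktilde_generating_function (d : ℕ) (σ : Equiv.Perm (Fin d)) :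
    (PowerSeries.mk fun t =>
        (Nat.card {x : Fin d → ℕ // MemKtilde σ x ∧ ∑ i, x i = t} : ℤ))
      * ∏ j ∈ Finset.range d, (1 - PowerSeries.X ^ (j + 1))
    = (PowerSeries.X : PowerSeries ℤ) ^ majIdx σ := by
  have h1 : (PowerSeries.mk fun t =>
        (Nat.card {x : Fin d → ℕ // MemKtilde σ x ∧ ∑ i, x i = t} : ℤ))
      = (PowerSeries.X : PowerSeries ℤ) ^ majIdx σ
        * PowerSeries.mk fun t => (decCount d t : ℤ) := by
    ext t
    rw [PowerSeries.coeff_mk, PowerSeries.coeff_X_pow_mul', ktCard]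
    split_ifs with h
    · rw [PowerSeries.coeff_mk]
    · rfl
  rw [h1, mul_assoc, decGF, mul_one]
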